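/- Let G be a finite p-group of rank r whose center Z(G) has rank k, with Z(G) ≅ Z/p^{n₁} × ⋯ × Z/p^{n_k} generated by a₁, …, a_k. For each j let χ_j : Z(G) → ℂ be the character sending a_j to a primitive p^{n_j}-th root of unity and a_{j'} to 1 for j' ≠ j, and let θ_j = Ind_{Z(G)}^G χ_j. Then every isotropy subgroup H of the diagonal G-action on S(θ₁) × ⋯ × S(θ_k) satisfies H ∩ Z(G) = {1}, and hence rank(H) ≤ r − k. -/

import Mathlib

/-- The rank of a group at the prime `p`: the largest `n` such that `(ℤ/p)ⁿ` embeds. -/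
noncomputable def pRank (p : ℕ) (G : Type*) [Group G] : ℕ :=
  sSup {n : ℕ | ∃ f : (Fin n → Multiplicative (ZMod p)) →* G, Function.Injective f}

open Function


lemma pow_cast_zero (p n : ℕ) (hn : 1 ≤ n) : (p : ℤ) • ((p : ZMod (p ^ n)) ^ (n - 1)) = 0 := by
  rw [zsmul_eq_mul]
  push_cast
  rw [← pow_succ', Nat.sub_add_cancel hn]
  rw_mod_cast [ZMod.natCast_self]

noncomputable def zmodEmb (p n : ℕ) (hn : 1 ≤ n) : ZMod p →+ ZMod (p ^ n) :=
  ZMod.lift p ⟨(zmultiplesHom _ ((p : ZMod (p ^ n)) ^ (n - 1))), pow_cast_zero p n hn⟩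

lemma zmodEmb_inj (p n : ℕ) [hp : Fact p.Prime] (hn : 1 ≤ n) : Injective (zmodEmb p n hn) := by
  rw [injective_iff_map_eq_zero]
  intro a ha
  have h1 : a = ((a.val : ℤ) : ZMod p) := by simp [ZMod.natCast_val, ZMod.intCast_cast]
  rw [h1] at ha
  rw [zmodEmb, ZMod.lift_coe] at ha
  simp only [zmultiplesHom_apply, zsmul_eq_mul] at ha
  have h2 : ((a.val * p ^ (n-1) : ℕ) : ZMod (p ^ n)) = 0 := by push_cast; exact_mod_cast ha
  rw [ZMod.natCast_eq_zero_iff] at h2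
  have h3 : p ∣ a.val := by
    have h4 : p ^ (n-1) * p ∣ a.val * p ^ (n-1) := by
      rw [← pow_succ, Nat.sub_add_cancel hn]; exact h2
    rw [mul_comm (a.val)] at h4
    exact (mul_dvd_mul_iff_left (a := p ^ (n-1)) (pow_ne_zero _ hp.out.pos.ne')).mp h4
  have h5 := Nat.eq_zero_of_dvd_of_lt h3 (a.val_lt)
  rw [h1, h5]; simp

lemma pRank_bdd (p : ℕ) [Fact p.Prime] (G : Type*) [Group G] [Fintype G] :
    BddAbove {n : ℕ | ∃ f : (Fin n → Multiplicative (ZMod p)) →* G, Function.Injective f} := by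
  refine ⟨Fintype.card G, fun n hn => ?_⟩
  obtain ⟨f, hf⟩ := hn
  have h1 := Fintype.card_le_of_injective f hf
  have h2 : Fintype.card (Fin n → Multiplicative (ZMod p)) = p ^ n := by
    simp [ZMod.card]
  rw [h2] at h1
  exact (calc n < 2 ^ n := (Nat.lt_two_pow_self (n := n))
    _ ≤ p ^ n := Nat.pow_le_pow_left (Fact.out (p := p.Prime)).two_le n
    _ ≤ Fintype.card G := h1).le


/-- Let `G` be a finite `p`-group of rank `r` whose center has rank `k`, with
`Z(G) ≅ ℤ/p^{n₁} × ⋯ × ℤ/p^{n_k}` via `e`.  Let `χ_j` be the character of `Z(G)` sending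
the `j`-th generator to a primitive `p^{n_j}`-th root of unity and the others to `1`, and
let `θ_j = Ind_{Z(G)}^G χ_j`, realized as the space of functions `f : G → ℂ` with
`f(g z) = χ_j(z) f(g)`, on which `G` acts by left translation `(g • f)(x) = f(g⁻¹x)`.
If `H` is the isotropy subgroup of a point `(m_1, …, m_k)` of the product of unit spheres
`S(θ₁) × ⋯ × S(θ_k)` under the diagonal `G`-action, then `H ∩ Z(G) = 1` and
`rank H ≤ r - k`. -/
theorem stmt_15 (p : ℕ) [Fact p.Prime] {G : Type*} [Group G] [Fintype G]
    (hG : IsPGroup p G) (r k : ℕ) (hr : pRank p G = r)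
    (nn : Fin k → ℕ) (hnn : ∀ j, 1 ≤ nn j)
    (e : Subgroup.center G ≃* (∀ j : Fin k, Multiplicative (ZMod (p ^ nn j))))
    (χ : Fin k → Subgroup.center G → ℂ)
    (hχ : ∀ (j : Fin k) (z : Subgroup.center G), χ j z = Complex.exp
      (2 * Real.pi * Complex.I *
        (((Multiplicative.toAdd (e z j)).val : ℂ) / ((p : ℂ) ^ nn j))))
    (m : Fin k → G → ℂ)
    (hmem : ∀ (j : Fin k) (z : Subgroup.center G) (g : G),
      m j (g * (z : G)) = χ j z * m j g)
    (hsphere : ∀ j : Fin k, ∑ x : G, ‖m j x‖ ^ 2 = 1)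
    (H : Subgroup G)
    (hH : ∀ g : G, g ∈ H ↔ ∀ (j : Fin k) (x : G), m j (g⁻¹ * x) = m j x) :
    H ⊓ Subgroup.center G = ⊥ ∧ pRank p H ≤ r - k := by
  have hp : p.Prime := Fact.out
  -- χ j z ≠ 1 when the j-th component of e z is nontrivial
  have hχne : ∀ (j : Fin k) (z : Subgroup.center G), e z j ≠ 1 → χ j z ≠ 1 := by
    intro j z hz hone
    rw [hχ] at hone
    rw [Complex.exp_eq_one_iff] at hone
    obtain ⟨n, hn⟩ := hone
    set a : ZMod (p ^ nn j) := Multiplicative.toAdd (e z j) with ha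
    have hNZ : NeZero (p ^ nn j) := ⟨pow_ne_zero _ hp.pos.ne'⟩
    have hane : a ≠ 0 := fun h => hz (by
      have : e z j = Multiplicative.ofAdd (0 : ZMod (p ^ nn j)) := by
        rw [← h, ha]; rfl
      simpa using this)
    have hval : 0 < a.val := Nat.pos_of_ne_zero (fun h => hane ((ZMod.val_eq_zero a).mp h))
    have hvlt : a.val < p ^ nn j := a.val_lt
    -- from hn : 2πi * (a.val / p^nn j) = n * (2πi), deduce a.val = n * p^nn j
    have h2pi : (2 * (Real.pi : ℂ) * Complex.I) ≠ 0 := by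
      simp [Real.pi_ne_zero, Complex.I_ne_zero]
    have hpn : ((p : ℂ) ^ nn j) ≠ 0 := pow_ne_zero _ (by exact_mod_cast hp.pos.ne')
    have heq : (a.val : ℂ) = (n : ℂ) * (p : ℂ) ^ nn j := by
      rw [mul_comm ((n : ℂ))] at hn
      have hdiv := mul_left_cancel₀ h2pi hn
      exact (div_eq_iff hpn).mp hdiv
    have heqz : (a.val : ℤ) = n * (p ^ nn j : ℕ) := by exact_mod_cast heq
    have hdvd : (p ^ nn j : ℤ) ∣ (a.val : ℤ) := ⟨n, by rw [heqz]; push_cast; ring⟩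
    have : (p ^ nn j : ℕ) ∣ a.val := by exact_mod_cast hdvd
    have := Nat.eq_zero_of_dvd_of_lt this hvlt
    omega
  -- Part 1
  have part1 : H ⊓ Subgroup.center G = ⊥ := by
    rw [Subgroup.eq_bot_iff_forall]
    intro g hg
    obtain ⟨hgH, hgZ⟩ := Subgroup.mem_inf.mp hg
    by_contra hgne
    set z : Subgroup.center G := ⟨g, hgZ⟩ with hzdef
    have hzne : z⁻¹ ≠ 1 := by
      simp only [ne_eq, inv_eq_one]
      intro h
      exact hgne (congrArg Subtype.val h)
    have : e z⁻¹ ≠ 1 := fun h => hzne (by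
      have h2 := congrArg e.symm h
      simpa using h2)
    obtain ⟨j, hj⟩ : ∃ j, e z⁻¹ j ≠ 1 := by
      by_contra h
      push_neg at h
      exact this (funext h)
    have hchi := hχne j z⁻¹ hj
    -- all m j x vanish
    have hzero : ∀ x : G, m j x = 0 := by
      intro x
      have h1 := (hH g).mp hgH j x
      have h2 : g⁻¹ * x = x * ((z⁻¹ : Subgroup.center G) : G) := by
        have := (Subgroup.mem_center_iff.mp (Subgroup.inv_mem _ hgZ)) x
        simpa using this.symm
      rw [h2, hmem j z⁻¹ x] at h1
      by_contra hmx
      exact hchi (mul_right_cancel₀ hmx (by rw [one_mul]; exact h1))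
    have := hsphere j
    simp [hzero] at this
  refine ⟨part1, ?_⟩
  -- Part 2
  -- embedding of (Fin k → ZMod p) into the center
  have hcenter : ∃ g : (Fin k → Multiplicative (ZMod p)) →* Subgroup.center G, Injective g := by
    refine ⟨e.symm.toMonoidHom.comp (MonoidHom.mk' (fun x j =>
      Multiplicative.ofAdd (zmodEmb p (nn j) (hnn j) (Multiplicative.toAdd (x j)))) ?_), ?_⟩
    · intro a b
      funext j
      simp [map_add]
    · apply e.symm.injective.comp
      intro a b hab
      funext j
      have := congrFun hab j
      exact Multiplicative.toAdd.injective (zmodEmb_inj p (nn j) (hnn j) (by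
        have : zmodEmb p (nn j) (hnn j) (Multiplicative.toAdd (a j)) =
            zmodEmb p (nn j) (hnn j) (Multiplicative.toAdd (b j)) := by
          simpa using this
        exact this))
  obtain ⟨gc, hgc⟩ := hcenter
  -- now bound pRank H
  rw [pRank]
  apply csSup_le
  · exact ⟨0, MonoidHom.mk' (fun _ => 1) (by simp), fun a b _ => Subsingleton.elim a b⟩
  intro n hn
  obtain ⟨f, hf⟩ := hn
  -- build combined injective hom (Fin (n+k) → Mult (ZMod p)) →* G
  have hcomb : (n + k) ∈ {n : ℕ | ∃ f : (Fin n → Multiplicative (ZMod p)) →* G, Function.Injective f} := by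
    refine ⟨MonoidHom.mk' (fun x => (f (x ∘ Fin.castAdd k) : G) * (gc (x ∘ Fin.natAdd n) : G)) ?_, ?_⟩
    · intro a b
      have hcm : ∀ (y : Fin k → Multiplicative (ZMod p)) (w : G),
          (gc y : G) * w = w * (gc y : G) :=
        fun y w => ((Subgroup.mem_center_iff.mp (gc y).2) w).symm
      have h1 : (a * b) ∘ Fin.castAdd k = (a ∘ Fin.castAdd k) * (b ∘ Fin.castAdd k) := rfl
      have h2 : (a * b) ∘ Fin.natAdd n = (a ∘ Fin.natAdd n) * (b ∘ Fin.natAdd n) := rfl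
      beta_reduce
      rw [h1, h2, map_mul, map_mul]
      push_cast
      simp only [mul_assoc]
      congr 1
      rw [hcm, hcm, ← mul_assoc, ← mul_assoc,
        ← hcm (a ∘ Fin.natAdd n) (↑(f (b ∘ Fin.castAdd k)))]
    · rw [injective_iff_map_eq_one]
      intro x hx
      simp only [MonoidHom.mk'_apply] at hx
      have hfx : (f (x ∘ Fin.castAdd k) : G) ∈ H ⊓ Subgroup.center G := by
        constructor
        · exact (f (x ∘ Fin.castAdd k)).2
        · have : (f (x ∘ Fin.castAdd k) : G) = ((gc (x ∘ Fin.natAdd n))⁻¹ : Subgroup.center G) := by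
            push_cast
            rw [eq_inv_iff_mul_eq_one]
            exact hx
          rw [this]
          exact ((gc (x ∘ Fin.natAdd n))⁻¹).2
      rw [part1, Subgroup.mem_bot] at hfx
      have hf1 : f (x ∘ Fin.castAdd k) = 1 := Subtype.ext (by rw [hfx]; rfl)
      have hg1 : gc (x ∘ Fin.natAdd n) = 1 := by
        have : (gc (x ∘ Fin.natAdd n) : G) = 1 := by
          rw [hfx, one_mul] at hx; exact hx
        exact Subtype.ext (by rw [this]; rfl)
      have ha := hf (hf1.trans (map_one f).symm)
      have hb := hgc (hg1.trans (map_one gc).symm)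
      funext i
      refine Fin.addCases ?_ ?_ i
      · intro i'; exact congrFun ha i'
      · intro i'; exact congrFun hb i'
  have hle : n + k ≤ pRank p G := le_csSup (pRank_bdd p G) hcomb
  omega
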